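/- For every integer n ≥ 2, the number v_n is divisible by (2n-3)^2. -/

import Mathlib

open Polynomial Finset

noncomputable def v (n : ℕ) : ℤ :=
  if n = 0 then -1 else
  ((1 - X) * ∏ j ∈ Finset.range (2 * n - 2),
      (C ((2 * n : ℤ) - 3 - (j : ℤ)) + C (j : ℤ) * X)).coeff (n - 1)

theorem v_div_sq (n : ℕ) (hn : 2 ≤ n) :
    (2 * (n : ℤ) - 3) ^ 2 ∣ v n := by
  have hn0 : n ≠ 0 := by omega
  rw [v, if_neg hn0]
  set m : ℤ := 2 * (n : ℤ) - 3 with hm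
  have h0 : (0 : ℕ) ∈ Finset.range (2 * n - 2) := by
    simp; omega
  have hk : (2 * n - 3 : ℕ) ∈ (Finset.range (2 * n - 2)).erase 0 := by
    simp only [Finset.mem_erase, Finset.mem_range]
    omega
  obtain ⟨Q, hQ⟩ : ∃ Q, (∏ j ∈ Finset.range (2 * n - 2),
      (C ((2 * n : ℤ) - 3 - (j : ℤ)) + C (j : ℤ) * X)) = C m * (C m * Q) := by
    rw [← Finset.mul_prod_erase _ _ h0, ← Finset.mul_prod_erase _ _ hk]
    refine ⟨X * ∏ j ∈ ((Finset.range (2 * n - 2)).erase 0).erase (2 * n - 3),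
        (C ((2 * n : ℤ) - 3 - (j : ℤ)) + C (j : ℤ) * X), ?_⟩
    have hc : ((2 * n - 3 : ℕ) : ℤ) = m := by push_cast; omega
    simp only [Nat.cast_zero, sub_zero, map_zero, zero_mul, add_zero, hc, hm, sub_self,
      zero_add]
    ring
  rw [hQ]
  have h2 : (1 - X) * (C m * (C m * Q)) = C m * (C m * ((1 - X) * Q)) := by ring
  rw [h2, coeff_C_mul, coeff_C_mul]
  exact ⟨((1 - X) * Q).coeff (n - 1), by ring⟩
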